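/- Assume the two-point Chowla conjecture in the form: for all integers h₁ ≠ h₂, lim_{N→∞} (1/N) ∑_{n=1}^{N} μ(n+h₁)μ(n+h₂) = 0, together with lim_{N→∞}(1/N)∑_{n=1}^N μ(n)² = 6/π². Then for every integer s ≥ 1 and h ≥ 1, limsup_{N→∞} (1/N) ∑_{n=1}^{N} |∑_{l=1}^{h} μ(n+ls)|² = 6h/π², and consequently limsup_{N→∞} (1/N) ∑_{n=1}^{N} |∑_{l=1}^{h} μ(n+ls)| ≤ c·√h for an absolute constant c independent of s. -/

import Mathlib

open Finset Filter ArithmeticFunction Real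

/-- Shifted mean square of the Möbius function. -/
private lemma shiftMean
    (h2 : Tendsto (fun N : ℕ => (1 / (N : ℝ)) *
        ∑ n ∈ Icc 1 N, ((moebius n : ℤ) : ℝ) ^ 2) atTop (nhds (6 / π ^ 2)))
    (k : ℕ) :
    Tendsto (fun N : ℕ => (1 / (N : ℝ)) *
        ∑ n ∈ Icc 1 N, ((moebius (n + k) : ℤ) : ℝ) ^ 2) atTop (nhds (6 / π ^ 2)) := by
  set g : ℕ → ℝ := fun n => ((moebius n : ℤ) : ℝ) ^ 2 with hg
  have hsum : ∀ N : ℕ, ∑ n ∈ Icc 1 N, g (n + k)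
      = (∑ n ∈ Icc 1 (N + k), g n) - ∑ n ∈ Icc 1 k, g n := by
    intro N
    have e1 : ∑ n ∈ Icc 1 k, g n + ∑ n ∈ Ioc k (N + k), g n
        = ∑ n ∈ Icc 1 (N + k), g n := by
      rw [show Icc 1 k = Ioc 0 k from Finset.Icc_add_one_left_eq_Ioc 0 k,
        show Icc 1 (N + k) = Ioc 0 (N + k) from Finset.Icc_add_one_left_eq_Ioc 0 (N + k)]
      exact Finset.sum_Ioc_consecutive g (Nat.zero_le k) (Nat.le_add_left k N)
    have e2 : ∑ n ∈ Icc 1 N, g (n + k) = ∑ n ∈ Ioc k (N + k), g n := by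
      rw [show Icc 1 N = Ioc 0 N from Finset.Icc_add_one_left_eq_Ioc 0 N,
        show Ioc k (N + k) = Finset.map (addLeftEmbedding k) (Ioc 0 N) by
          rw [Finset.map_add_left_Ioc]; congr 1 <;> omega,
        Finset.sum_map]
      exact Finset.sum_congr rfl fun n _ => by
        rw [addLeftEmbedding_apply, add_comm]
    rw [e2]; linarith [e1]
  have hA : Tendsto (fun N : ℕ => (1 / ((N + k : ℕ) : ℝ)) *
      ∑ n ∈ Icc 1 (N + k), g n) atTop (nhds (6 / π ^ 2)) :=
    h2.comp (tendsto_add_atTop_nat k)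
  have hR : Tendsto (fun N : ℕ => ((N + k : ℕ) : ℝ) / (N : ℝ)) atTop (nhds 1) := by
    have h0 : Tendsto (fun N : ℕ => 1 + (k : ℝ) * (1 / (N : ℝ))) atTop
        (nhds (1 + (k : ℝ) * 0)) :=
      tendsto_const_nhds.add (tendsto_const_nhds.mul tendsto_one_div_atTop_nhds_zero_nat)
    rw [mul_zero, add_zero] at h0
    refine h0.congr' ?_
    filter_upwards [eventually_ge_atTop 1] with N hN
    have hN0 : (N : ℝ) ≠ 0 := by
      have : (1 : ℝ) ≤ (N : ℝ) := by exact_mod_cast hN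
      linarith
    push_cast
    field_simp
  have hB : Tendsto (fun N : ℕ => (1 / (N : ℝ)) * ∑ n ∈ Icc 1 k, g n) atTop
      (nhds (0 * ∑ n ∈ Icc 1 k, g n)) :=
    tendsto_one_div_atTop_nhds_zero_nat.mul_const _
  rw [zero_mul] at hB
  have total := (hR.mul hA).sub hB
  rw [one_mul, sub_zero] at total
  refine total.congr' ?_
  filter_upwards [eventually_ge_atTop 1] with N hN
  have hN0 : (N : ℝ) ≠ 0 := by
    have : (1 : ℝ) ≤ (N : ℝ) := by exact_mod_cast hN
    linarith
  have hNk0 : ((N + k : ℕ) : ℝ) ≠ 0 := by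
    have : (1 : ℝ) ≤ ((N + k : ℕ) : ℝ) := by exact_mod_cast Nat.le_add_right _ _ |>.trans' hN
    linarith
  rw [hsum N]
  field_simp

/-- Main convergence: the normalized second moment tends to `6h/π²`. -/
private lemma mainTendsto
    (h1 : ∀ h₁ h₂ : ℕ, h₁ ≠ h₂ →
      Tendsto (fun N : ℕ => (1 / (N : ℝ)) *
        ∑ n ∈ Icc 1 N, ((moebius (n + h₁) : ℤ) : ℝ) * ((moebius (n + h₂) : ℤ) : ℝ))
        atTop (nhds 0))
    (h2 : Tendsto (fun N : ℕ => (1 / (N : ℝ)) *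
        ∑ n ∈ Icc 1 N, ((moebius n : ℤ) : ℝ) ^ 2) atTop (nhds (6 / π ^ 2)))
    (s h : ℕ) (hs : 1 ≤ s) (hh : 1 ≤ h) :
    Tendsto (fun N : ℕ => (1 / (N : ℝ)) *
        ∑ n ∈ Icc 1 N, (∑ l ∈ Icc 1 h, ((moebius (n + l * s) : ℤ) : ℝ)) ^ 2)
      atTop (nhds (6 * (h : ℝ) / π ^ 2)) := by
  set f : ℕ → ℕ → ℝ := fun n l => ((moebius (n + l * s) : ℤ) : ℝ) with hf
  have expand : ∀ N : ℕ, (1 / (N : ℝ)) *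
      ∑ n ∈ Icc 1 N, (∑ l ∈ Icc 1 h, f n l) ^ 2
      = ∑ l ∈ Icc 1 h, ∑ l' ∈ Icc 1 h,
          (1 / (N : ℝ)) * ∑ n ∈ Icc 1 N, f n l * f n l' := by
    intro N
    have e1 : ∑ n ∈ Icc 1 N, (∑ l ∈ Icc 1 h, f n l) ^ 2
        = ∑ l ∈ Icc 1 h, ∑ l' ∈ Icc 1 h, ∑ n ∈ Icc 1 N, f n l * f n l' := by
      calc ∑ n ∈ Icc 1 N, (∑ l ∈ Icc 1 h, f n l) ^ 2
          = ∑ n ∈ Icc 1 N, ∑ l ∈ Icc 1 h, ∑ l' ∈ Icc 1 h, f n l * f n l' := by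
            refine Finset.sum_congr rfl fun n _ => ?_
            rw [sq, Finset.sum_mul_sum]
        _ = ∑ l ∈ Icc 1 h, ∑ n ∈ Icc 1 N, ∑ l' ∈ Icc 1 h, f n l * f n l' :=
            Finset.sum_comm
        _ = ∑ l ∈ Icc 1 h, ∑ l' ∈ Icc 1 h, ∑ n ∈ Icc 1 N, f n l * f n l' := by
            exact Finset.sum_congr rfl fun l _ => Finset.sum_comm
    rw [e1, Finset.mul_sum]
    exact Finset.sum_congr rfl fun l _ => Finset.mul_sum _ _ _
  have limval : (6 * (h : ℝ) / π ^ 2)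
      = ∑ l ∈ Icc 1 h, ∑ l' ∈ Icc 1 h,
          (if l' = l then (6 / π ^ 2 : ℝ) else 0) := by
    have : ∀ l ∈ Icc 1 h, (∑ l' ∈ Icc 1 h,
        (if l' = l then (6 / π ^ 2 : ℝ) else 0)) = 6 / π ^ 2 := by
      intro l hl
      rw [Finset.sum_ite_eq' (Icc 1 h) l fun _ => (6 / π ^ 2 : ℝ), if_pos hl]
    rw [Finset.sum_congr rfl this, Finset.sum_const, Nat.card_Icc]
    simp
    ring
  have key : Tendsto (fun N : ℕ => ∑ l ∈ Icc 1 h, ∑ l' ∈ Icc 1 h,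
      (1 / (N : ℝ)) * ∑ n ∈ Icc 1 N, f n l * f n l') atTop
      (nhds (∑ l ∈ Icc 1 h, ∑ l' ∈ Icc 1 h,
        (if l' = l then (6 / π ^ 2 : ℝ) else 0))) := by
    refine tendsto_finset_sum _ fun l hl => ?_
    refine tendsto_finset_sum _ fun l' hl' => ?_
    by_cases hd : l' = l
    · subst hd
      rw [if_pos rfl]
      have := shiftMean h2 (l' * s)
      refine this.congr fun N => ?_
      congr 1
      exact Finset.sum_congr rfl fun n _ => pow_two _
    · rw [if_neg hd]
      refine h1 (l * s) (l' * s) ?_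
      intro hc
      exact hd (Nat.eq_of_mul_eq_mul_right (by omega) hc.symm)
  rw [limval]
  exact key.congr fun N => (expand N).symm

/-- Assuming the two-point Chowla conjecture and the mean square of the Möbius function,
for all `s ≥ 1`, `h ≥ 1` the limsup of `(1/N)∑_{n≤N}|∑_{l=1}^h μ(n+ls)|²` equals
`6h/π²`, and consequently the first moment is at most `c√h` for an absolute `c`. -/
theorem stmt_3
    (h1 : ∀ h₁ h₂ : ℕ, h₁ ≠ h₂ →
      Tendsto (fun N : ℕ => (1 / (N : ℝ)) *
        ∑ n ∈ Icc 1 N, ((moebius (n + h₁) : ℤ) : ℝ) * ((moebius (n + h₂) : ℤ) : ℝ))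
        atTop (nhds 0))
    (h2 : Tendsto (fun N : ℕ => (1 / (N : ℝ)) *
        ∑ n ∈ Icc 1 N, ((moebius n : ℤ) : ℝ) ^ 2) atTop (nhds (6 / π ^ 2))) :
    (∀ s h : ℕ, 1 ≤ s → 1 ≤ h →
      limsup (fun N : ℕ => (1 / (N : ℝ)) *
        ∑ n ∈ Icc 1 N, |∑ l ∈ Icc 1 h, ((moebius (n + l * s) : ℤ) : ℝ)| ^ 2) atTop
        = 6 * (h : ℝ) / π ^ 2) ∧
    ∃ c : ℝ, 0 < c ∧ ∀ s h : ℕ, 1 ≤ s → 1 ≤ h →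
      limsup (fun N : ℕ => (1 / (N : ℝ)) *
        ∑ n ∈ Icc 1 N, |∑ l ∈ Icc 1 h, ((moebius (n + l * s) : ℤ) : ℝ)|) atTop
        ≤ c * Real.sqrt h := by
  have habs : ∀ s h N : ℕ, (∑ n ∈ Icc 1 N,
      |∑ l ∈ Icc 1 h, ((moebius (n + l * s) : ℤ) : ℝ)| ^ 2)
      = ∑ n ∈ Icc 1 N, (∑ l ∈ Icc 1 h, ((moebius (n + l * s) : ℤ) : ℝ)) ^ 2 :=
    fun s h N => Finset.sum_congr rfl fun n _ => sq_abs _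
  have hb : ∀ s h : ℕ, 1 ≤ s → 1 ≤ h →
      Tendsto (fun N : ℕ => (1 / (N : ℝ)) *
        ∑ n ∈ Icc 1 N, |∑ l ∈ Icc 1 h, ((moebius (n + l * s) : ℤ) : ℝ)| ^ 2)
        atTop (nhds (6 * (h : ℝ) / π ^ 2)) := by
    intro s h hs hh
    have := mainTendsto h1 h2 s h hs hh
    refine this.congr fun N => ?_
    rw [habs]
  constructor
  · intro s h hs hh
    exact (hb s h hs hh).limsup_eq
  · refine ⟨3, by norm_num, fun s h hs hh => ?_⟩
    set X : ℕ → ℕ → ℝ := fun N n => |∑ l ∈ Icc 1 h, ((moebius (n + l * s) : ℤ) : ℝ)|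
      with hX
    set a : ℕ → ℝ := fun N => (1 / (N : ℝ)) * ∑ n ∈ Icc 1 N, X N n with ha
    set b : ℕ → ℝ := fun N => (1 / (N : ℝ)) * ∑ n ∈ Icc 1 N, (X N n) ^ 2 with hbdef
    have hbt : Tendsto b atTop (nhds (6 * (h : ℝ) / π ^ 2)) := hb s h hs hh
    have hsb : Tendsto (fun N => Real.sqrt (b N)) atTop
        (nhds (Real.sqrt (6 * (h : ℝ) / π ^ 2))) := hbt.sqrt
    have hle : ∀ᶠ N : ℕ in atTop, a N ≤ Real.sqrt (b N) := by
      filter_upwards [eventually_ge_atTop 1] with N hN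
      have hN0 : (0 : ℝ) < (N : ℝ) := by exact_mod_cast hN
      have ha0 : 0 ≤ a N := by
        apply mul_nonneg (by positivity)
        exact Finset.sum_nonneg fun n _ => abs_nonneg _
      have hb0 : 0 ≤ b N := by
        apply mul_nonneg (by positivity)
        exact Finset.sum_nonneg fun n _ => sq_nonneg _
      rw [Real.le_sqrt ha0 hb0]
      have hcs : (∑ n ∈ Icc 1 N, X N n) ^ 2
          ≤ (N : ℝ) * ∑ n ∈ Icc 1 N, (X N n) ^ 2 := by
        have := sq_sum_le_card_mul_sum_sq (s := Icc 1 N) (f := X N)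
        rwa [Nat.card_Icc, Nat.add_sub_cancel] at this
      have : a N ^ 2 = (1 / (N : ℝ))^2 * (∑ n ∈ Icc 1 N, X N n) ^ 2 := by
        rw [ha]; ring
      rw [this, hbdef]
      calc (1 / (N : ℝ))^2 * (∑ n ∈ Icc 1 N, X N n) ^ 2
          ≤ (1 / (N : ℝ))^2 * ((N : ℝ) * ∑ n ∈ Icc 1 N, (X N n) ^ 2) := by
            apply mul_le_mul_of_nonneg_left hcs (by positivity)
        _ = (1 / (N : ℝ)) * ∑ n ∈ Icc 1 N, (X N n) ^ 2 := by
            field_simp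
    have h1' : limsup a atTop ≤ limsup (fun N => Real.sqrt (b N)) atTop := by
      refine limsup_le_limsup hle ?_ ?_
      · refine isCoboundedUnder_le_of_eventually_le atTop (x := 0) ?_
        filter_upwards [eventually_ge_atTop 1] with N hN
        apply mul_nonneg (by positivity)
        exact Finset.sum_nonneg fun n _ => abs_nonneg _
      · exact hsb.isBoundedUnder_le
    rw [hsb.limsup_eq] at h1'
    refine h1'.trans ?_
    have hπ : (1:ℝ) ≤ π ^ 2 := by nlinarith [Real.pi_gt_three]
    have hq : 6 * (h : ℝ) / π ^ 2 ≤ 9 * (h : ℝ) := by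
      have hh0 : (0:ℝ) ≤ 6 * (h:ℝ) := by positivity
      have := div_le_self hh0 hπ
      have hh1 : 6 * (h:ℝ) ≤ 9 * (h:ℝ) := by
        have : (0:ℝ) ≤ (h:ℝ) := Nat.cast_nonneg h
        nlinarith
      linarith
    calc Real.sqrt (6 * (h : ℝ) / π ^ 2) ≤ Real.sqrt (9 * (h : ℝ)) :=
          Real.sqrt_le_sqrt hq
      _ = 3 * Real.sqrt h := by
          rw [show (9:ℝ) * (h:ℝ) = 3^2 * (h:ℝ) by norm_num,
            Real.sqrt_mul (by positivity), Real.sqrt_sq (by norm_num)]
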